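/- Let A = (a_{rs})_{3×3}, b = (b_1, b_2, b_3) be real, c_r = a_{r1} + a_{r2} + a_{r3}, and suppose the fourth-order conditions hold: ∑b_r = 1, ∑b_r c_r = 1/2, ∑b_r c_r² = 1/3, ∑_{r,s} b_r a_{rs} c_s = 1/6, ∑b_r c_r³ = 1/4, ∑_{r,s} b_r c_r a_{rs} c_s = 1/8, ∑_{r,s} b_r a_{rs} c_s² = 1/12, ∑_{r,s,l} b_r a_{rs} a_{sl} c_l = 1/24, together with a_{11} + a_{22} + a_{33} = 1/2. Then (i) 2D − S = 0 and (ii) −2D + M = 1/12, where D = a_{11}a_{22}a_{33} + a_{12}a_{23}a_{31} + a_{21}a_{32}a_{13} − a_{11}a_{23}a_{32} − a_{22}a_{31}a_{13} − a_{33}a_{12}a_{21}, M = a_{11}a_{22} + a_{22}a_{33} + a_{33}a_{11} − a_{12}a_{21} − a_{23}a_{32} − a_{31}a_{13}, and S = (a_{22}a_{33} + a_{12}a_{23} + a_{13}a_{32} − a_{23}a_{32} − a_{12}a_{33} − a_{13}a_{22})b_1 + (a_{33}a_{11} + a_{23}a_{31} + a_{21}a_{13} − a_{31}a_{13} − a_{23}a_{11}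 − a_{21}a_{33})b_2 + (a_{11}a_{22} + a_{31}a_{12} + a_{32}a_{21} − a_{12}a_{21} − a_{31}a_{22} − a_{32}a_{11})b_3. -/
import Mathlib


open Matrix

/-- For a three-stage Runge–Kutta scheme satisfying the eight
fourth-order Butcher conditions together with the trace condition
`a₁₁ + a₂₂ + a₃₃ = 1/2`, one has (i) `2D − S = 0` and (ii) `−2D + M = 1/12`. -/
theorem three_stage_fourth_order_identities
    (A : Matrix (Fin 3) (Fin 3) ℝ) (b : Fin 3 → ℝ) (c : Fin 3 → ℝ)
    (hc : ∀ r, c r = ∑ s, A r s)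
    (h1 : ∑ r, b r = 1)
    (h2 : ∑ r, b r * c r = 1 / 2)
    (h3 : ∑ r, b r * c r ^ 2 = 1 / 3)
    (h4 : ∑ r, ∑ s, b r * A r s * c s = 1 / 6)
    (h5 : ∑ r, b r * c r ^ 3 = 1 / 4)
    (h6 : ∑ r, ∑ s, b r * c r * A r s * c s = 1 / 8)
    (h7 : ∑ r, ∑ s, b r * A r s * c s ^ 2 = 1 / 12)
    (h8 : ∑ r, ∑ s, ∑ l, b r * A r s * A s l * c l = 1 / 24)
    (htr : A 0 0 + A 1 1 + A 2 2 = 1 / 2)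
    (D M S : ℝ)
    (hD : D = A 0 0 * A 1 1 * A 2 2 + A 0 1 * A 1 2 * A 2 0
        + A 1 0 * A 2 1 * A 0 2 - A 0 0 * A 1 2 * A 2 1
        - A 1 1 * A 2 0 * A 0 2 - A 2 2 * A 0 1 * A 1 0)
    (hM : M = A 0 0 * A 1 1 + A 1 1 * A 2 2 + A 2 2 * A 0 0
        - A 0 1 * A 1 0 - A 1 2 * A 2 1 - A 2 0 * A 0 2)
    (hS : S = (A 1 1 * A 2 2 + A 0 1 * A 1 2 + A 0 2 * A 2 1
          - A 1 2 * A 2 1 - A 0 1 * A 2 2 - A 0 2 * A 1 1) * b 0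
        + (A 2 2 * A 0 0 + A 1 2 * A 2 0 + A 1 0 * A 0 2
          - A 2 0 * A 0 2 - A 1 2 * A 0 0 - A 1 0 * A 2 2) * b 1
        + (A 0 0 * A 1 1 + A 2 0 * A 0 1 + A 2 1 * A 1 0
          - A 0 1 * A 1 0 - A 2 0 * A 1 1 - A 2 1 * A 0 0) * b 2) :
    2 * D - S = 0 ∧ -2 * D + M = 1 / 12 := by
  have c0 := hc 0; have c1 := hc 1; have c2 := hc 2
  simp only [Fin.sum_univ_three] at h1 h2 h4 h8 c0 c1 c2
  rw [c0, c1, c2] at h2 h4 h8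
  subst hD hM hS
  set a00 := A 0 0; set a01 := A 0 1; set a02 := A 0 2
  set a10 := A 1 0; set a11 := A 1 1; set a12 := A 1 2
  set a20 := A 2 0; set a21 := A 2 1; set a22 := A 2 2
  set T := a00 + a11 + a22 with hT
  set Mp := a00*a11 + a11*a22 + a22*a00 - a01*a10 - a12*a21 - a20*a02 with hMp
  set Dp := a00*a11*a22 + a01*a12*a20 + a10*a21*a02 - a00*a12*a21 - a11*a20*a02 - a22*a01*a10 with hDp
  constructor
  · linear_combination (2 : ℝ)*h8 + (-2*T)*h4 + (2*Mp)*h2 + (-2*Dp)*h1 + (-2/3)*htr - h4 + T*h2 - Mp*h1 + (5/6)*htr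
  · linear_combination (-2 : ℝ)*h8 + 2*T*h4 + (-2*Mp)*h2 + 2*Dp*h1 + (1/3)*htr
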